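/- arXiv:1909.06079 — 3 statements merged into one kernel-verified Lean document; each statement's English description precedes it below -/
import Mathlib

section
/- For every cube Q in ℝ^d there exists an index i ∈ {1,...,2^d} and a cube Q_i belonging to the i-th shifted dyadic grid D_i such that Q ⊆ Q_i and the side length of Q_i is at most 6 times the side length of Q. -/
open MeasureTheory ENNReal

noncomputable section

/-- An axis-parallel (half-open) cube in `ℝ^d` with lower-left corner `c` and side length `l`. -/
def Cube (d : ℕ) (c : Fin d → ℝ) (l : ℝ) : Set (Fin d → ℝ) :=
  {x | ∀ i, c i ≤ x i ∧ x i < c i + l}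

/-- One-dimensional key lemma: any interval of length `l < L/3` fits in a cell of one of the
two grids `Lℤ` and `Lℤ + εL/3`. -/
lemma shifted_dyadic_key (L a l : ℝ) (hL : 0 < L) (hl : 0 < l) (h3 : 3 * l < L)
    (ε : ℝ) (hε : ε = 1 ∨ ε = -1) :
    ∃ (b : Bool) (j : ℤ), L * ((j : ℝ) + ε * (if b then 1/3 else 0)) ≤ a ∧
      a + l ≤ L * ((j : ℝ) + ε * (if b then 1/3 else 0)) + L := by
  set u := a / L with hu
  have ha : a = L * u := by rw [hu, mul_div_assoc', eq_div_iff hL.ne', mul_comm]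
  have h1 : (⌊u⌋ : ℝ) ≤ u := Int.floor_le u
  have h2 : u < ⌊u⌋ + 1 := Int.lt_floor_add_one u
  by_cases hc : u - ⌊u⌋ ≤ 1 - l / L
  · refine ⟨false, ⌊u⌋, ?_, ?_⟩ <;> simp only [Bool.false_eq_true, if_false, mul_zero, add_zero]
    · nlinarith
    · have hlL : L * (l / L) = l := by field_simp
      nlinarith
  · push_neg at hc
    have hll : l / L < 1/3 := by rw [div_lt_iff₀ hL]; linarith
    have hlL : L * (l / L) = l := by field_simp
    have hc' : 2/3 < u - ⌊u⌋ := by linarith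
    rcases hε with hε | hε
    · refine ⟨true, ⌊u⌋, ?_, ?_⟩ <;>
        simp only [hε, if_true, one_mul]
      · nlinarith
      · nlinarith
    · refine ⟨true, ⌊u⌋ + 1, ?_, ?_⟩ <;>
        simp only [hε, if_true] <;> push_cast
      · nlinarith
      · nlinarith

/-- Every cube `Q` in `ℝ^d` is contained in a cube of one of the `2^d` shifted dyadic grids
`D_t = {2^{-k}([0,1)^d + j + (-1)^k t) : k ∈ ℤ, j ∈ ℤ^d}`, `t ∈ {0,1/3}^d`,
whose side length is at most `6 ℓ(Q)`. -/
theorem shifted_dyadic_cover (d : ℕ) (c : Fin d → ℝ) (l : ℝ) (hl : 0 < l) :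
    ∃ (t : Fin d → Bool) (k : ℤ) (j : Fin d → ℤ),
      Cube d c l ⊆
        Cube d
          (fun i => (2:ℝ) ^ (-k) * ((j i : ℝ) + (-1 : ℝ) ^ k * (if t i then 1/3 else 0)))
          ((2:ℝ) ^ (-k)) ∧
      (2:ℝ) ^ (-k) ≤ 6 * l := by
  obtain ⟨n, hn1, hn2⟩ := exists_mem_Ico_zpow (show (0:ℝ) < 3 * l by linarith)
    (show (1:ℝ) < 2 by norm_num)
  set k : ℤ := -(n + 1) with hk
  have hnk : -k = n + 1 := by simp [hk]
  set L : ℝ := (2:ℝ) ^ (-k) with hLdef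
  have hLeq : L = (2:ℝ) ^ (n + 1) := by rw [hLdef, hnk]
  have hL : 0 < L := by rw [hLdef]; positivity
  have h3 : 3 * l < L := by rw [hLeq]; exact hn2
  have hL6 : L ≤ 6 * l := by
    rw [hLeq, zpow_add₀ (by norm_num : (2:ℝ) ≠ 0), zpow_one]
    nlinarith [hn1]
  have hε : ((-1:ℝ)) ^ k = 1 ∨ ((-1:ℝ)) ^ k = -1 := by
    rcases Int.even_or_odd k with h | h
    · exact Or.inl h.neg_one_zpow
    · exact Or.inr h.neg_one_zpow
  have key : ∀ i : Fin d, ∃ (b : Bool) (j : ℤ),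
      L * ((j : ℝ) + ((-1:ℝ)) ^ k * (if b then 1/3 else 0)) ≤ c i ∧
      c i + l ≤ L * ((j : ℝ) + ((-1:ℝ)) ^ k * (if b then 1/3 else 0)) + L :=
    fun i => shifted_dyadic_key L (c i) l hL hl h3 _ hε
  choose t j hj1 hj2 using key
  refine ⟨t, k, j, ?_, hL6⟩
  intro x hx i
  constructor
  · exact le_trans (hj1 i) (hx i).1
  · exact lt_of_lt_of_le (hx i).2 (hj2 i)
end
end

section
/- If the multilinear maximal operator satisfies the two-weight strong type bound ‖M(f_1 σ_1, ..., f_m σ_m)‖_{L^p(ω)} ≤ C ∏_{i=1}^m ‖f_i‖_{L^{p_i}(σ_i)} for all f_i ∈ L^{p_i}(σ_i), then the weights satisfy the joint A_{\vec p} condition: sup_Q (|Q|^{-1} ∫_Q ω) ∏_{i=1}^m (|Q|^{-1} ∫_Q σ_i)^{p/p_i'} < ∞, with constant controlled by C^p. -/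
open MeasureTheory ENNReal

noncomputable section

/-- The multilinear maximal operator `M(f₁,…,f_m)(x) = sup_{Q ∋ x} ∏ᵢ |Q|⁻¹ ∫_Q fᵢ`. -/
def mMax (d m : ℕ) (f : Fin m → (Fin d → ℝ) → ℝ≥0∞) (x : Fin d → ℝ) : ℝ≥0∞ :=
  ⨆ (c : Fin d → ℝ) (l : ℝ) (_ : 0 < l) (_ : x ∈ Cube d c l),
    ∏ i, (∫⁻ y in Cube d c l, f i y) / volume (Cube d c l)

lemma cube_eq_pi (d : ℕ) (c : Fin d → ℝ) (l : ℝ) :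
    Cube d c l = Set.pi Set.univ (fun i => Set.Ico (c i) (c i + l)) := by
  ext x; simp [Cube, Set.mem_pi, Set.mem_Ico]

lemma cube_measurable (d : ℕ) (c : Fin d → ℝ) (l : ℝ) : MeasurableSet (Cube d c l) := by
  rw [cube_eq_pi]
  exact MeasurableSet.univ_pi fun i => measurableSet_Ico

lemma cube_volume (d : ℕ) (c : Fin d → ℝ) (l : ℝ) :
    volume (Cube d c l) = ENNReal.ofReal l ^ d := by
  rw [cube_eq_pi, volume_pi_pi]
  simp [Real.volume_Ico]

lemma rpow_finset_sum {ι : Type*} (s : Finset ι) (f : ι → ℝ) {x : ℝ≥0∞}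
    (hx : x ≠ 0) (hx' : x ≠ ∞) :
    x ^ (∑ i ∈ s, f i) = ∏ i ∈ s, x ^ f i := by
  classical
  induction s using Finset.induction with
  | empty => simp
  | insert _ _ hi ih =>
      rw [Finset.sum_insert hi, Finset.prod_insert hi, ENNReal.rpow_add _ _ hx hx', ih]

lemma alg_lemma {m : ℕ} {p : ℝ} {pp : Fin m → ℝ} (hp : 0 < p) (hpp : ∀ i, 1 < pp i)
    (hsum : 1 / p = ∑ i, 1 / pp i)
    {S : Fin m → ℝ≥0∞} (hS0 : ∀ i, S i ≠ 0) (hSt : ∀ i, S i ≠ ∞)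
    {V W C : ℝ≥0∞} (hV0 : V ≠ 0) (hVt : V ≠ ∞)
    (key : (∏ i, S i / V) * W ^ (1 / p) ≤ C * ∏ i, (S i) ^ (1 / pp i)) :
    (W / V) * ∏ i, (S i / V) ^ (p * (pp i - 1) / pp i) ≤ C ^ p := by
  have hppos : ∀ i, 0 < pp i := fun i => lt_trans one_pos (hpp i)
  set I : ℝ≥0∞ := V⁻¹ with hI
  have hI0 : I ≠ 0 := ENNReal.inv_ne_zero.2 hVt
  have hIt : I ≠ ∞ := ENNReal.inv_ne_top.2 hV0
  set e : Fin m → ℝ := fun i => p * (pp i - 1) / pp i with he_def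
  have he : ∀ i, 0 ≤ e i := fun i =>
    div_nonneg (mul_nonneg hp.le (by linarith [hpp i])) (hppos i).le
  -- raise key to the power p
  have key2 := ENNReal.rpow_le_rpow key hp.le
  have keyL : ((∏ i, S i / V) * W ^ (1 / p)) ^ p = (∏ i, S i / V) ^ p * W := by
    rw [ENNReal.mul_rpow_of_nonneg _ _ hp.le, ← ENNReal.rpow_mul,
      one_div_mul_cancel hp.ne', ENNReal.rpow_one]
  have keyR : (C * ∏ i, (S i) ^ (1 / pp i)) ^ p = C ^ p * ∏ i, S i ^ (1 / pp i * p) := by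
    rw [ENNReal.mul_rpow_of_nonneg _ _ hp.le]
    congr 1
    rw [← ENNReal.prod_rpow_of_nonneg hp.le]
    exact Finset.prod_congr rfl fun i _ => (ENNReal.rpow_mul _ _ _).symm
  rw [keyL, keyR] at key2
  -- key2 : (∏ S/V)^p * W ≤ C^p * ∏ S^((1/pp i)*p)
  set T : ℝ≥0∞ := ∏ i, S i ^ (1 / pp i * p) with hT
  have hfac0 : ∀ (i : Fin m) (y : ℝ), S i ^ y ≠ 0 := fun i y => by
    simp [ENNReal.rpow_eq_zero_iff, hS0 i, hSt i]
  have hfact : ∀ (i : Fin m) (y : ℝ), S i ^ y ≠ ∞ := fun i y => by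
    simp [ENNReal.rpow_eq_top_iff, hS0 i, hSt i]
  have hT0 : T ≠ 0 := Finset.prod_ne_zero_iff.2 fun i _ => hfac0 i _
  have hTt : T ≠ ∞ := (ENNReal.prod_lt_top fun i _ => (hfact i _).lt_top).ne
  rw [← ENNReal.mul_le_mul_iff_left hT0 hTt]
  refine le_trans (le_of_eq ?_) key2
  -- show (W/V) * ∏ (S/V)^(e i) * T = (∏ S/V)^p * W
  have hsum_e : ∑ i, e i = m * p - 1 := by
    have h1 : ∀ i, e i = p - p * (1 / pp i) := by
      intro i
      have := (hppos i).ne'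
      simp only [he_def]
      field_simp [he_def]
    rw [Finset.sum_congr rfl fun i _ => h1 i, Finset.sum_sub_distrib, ← Finset.mul_sum,
      ← hsum, Finset.sum_const, Finset.card_univ, Fintype.card_fin,
      mul_one_div_cancel hp.ne', nsmul_eq_mul]
  have hdiv : ∀ (x : ℝ≥0∞) (y : ℝ), 0 ≤ y → (x / V) ^ y = x ^ y * I ^ y := by
    intro x y hy
    rw [div_eq_mul_inv, ENNReal.mul_rpow_of_nonneg _ _ hy, hI]
  calc (W / V) * (∏ i, (S i / V) ^ e i) * T
      = W * I * ((∏ i, S i ^ e i) * ∏ i, I ^ e i) * T := by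
        rw [div_eq_mul_inv, ← Finset.prod_mul_distrib]
        congr 2
        exact Finset.prod_congr rfl fun i _ => hdiv _ _ (he i)
    _ = ((∏ i, S i ^ e i) * T) * (I * ∏ i, I ^ e i) * W := by ring
    _ = (∏ i, S i ^ p) * (I ^ ((m : ℝ) * p)) * W := by
        congr 1
        congr 1
        · rw [hT, ← Finset.prod_mul_distrib]
          refine Finset.prod_congr rfl fun i _ => ?_
          rw [← ENNReal.rpow_add _ _ (hS0 i) (hSt i)]
          congr 1
          have := (hppos i).ne'
          simp only [he_def]
          field_simp [he_def]
          ring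
        · rw [← rpow_finset_sum _ _ hI0 hIt, hsum_e]
          nth_rewrite 1 [← ENNReal.rpow_one I]
          rw [← ENNReal.rpow_add _ _ hI0 hIt]
          congr 1
          ring
    _ = (∏ i, S i / V) ^ p * W := by
        congr 1
        rw [← ENNReal.prod_rpow_of_nonneg hp.le]
        rw [show I ^ ((m : ℝ) * p) = ∏ _i : Fin m, I ^ p by
          rw [Finset.prod_const, Finset.card_univ, Fintype.card_fin, ← ENNReal.rpow_natCast,
            ← ENNReal.rpow_mul, mul_comm]]
        rw [← Finset.prod_mul_distrib]
        exact Finset.prod_congr rfl fun i _ => (hdiv _ _ hp.le).symm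

/-- The two-weight strong type bound
`‖M(f₁σ₁,…,f_mσ_m)‖_{L^p(ω)} ≤ C ∏ᵢ ‖fᵢ‖_{L^{pᵢ}(σᵢ)}` implies the joint `A_{p⃗}` condition:
for every cube `Q`, `(avg_Q ω) ∏ᵢ (avg_Q σᵢ)^{p/pᵢ'} ≤ C^p`. -/
theorem strong_bound_implies_Ap (d m : ℕ) (hm : 0 < m)
    (p : ℝ) (pp : Fin m → ℝ) (hpp : ∀ i, 1 < pp i)
    (hp : 1 / p = ∑ i, 1 / pp i)
    (ω : (Fin d → ℝ) → ℝ≥0∞) (σ : Fin m → (Fin d → ℝ) → ℝ≥0∞)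
    (hω : Measurable ω) (hσ : ∀ i, Measurable (σ i))
    (hloc : ∀ (i : Fin m) (c : Fin d → ℝ) (l : ℝ), (∫⁻ x in Cube d c l, σ i x) < ∞)
    (C : ℝ≥0∞)
    (hbdd : ∀ f : Fin m → (Fin d → ℝ) → ℝ≥0∞, (∀ i, Measurable (f i)) →
      (∫⁻ x, (mMax d m (fun i y => f i y * σ i y) x) ^ p * ω x) ^ (1 / p)
        ≤ C * ∏ i, (∫⁻ x, (f i x) ^ (pp i) * σ i x) ^ (1 / pp i)) :
    ∀ (c : Fin d → ℝ) (l : ℝ), 0 < l →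
      ((∫⁻ x in Cube d c l, ω x) / volume (Cube d c l))
          * ∏ i, ((∫⁻ x in Cube d c l, σ i x) / volume (Cube d c l))
              ^ (p * (pp i - 1) / pp i)
        ≤ C ^ p := by
  intro c l hl
  have hppos : ∀ i, 0 < pp i := fun i => lt_trans one_pos (hpp i)
  have hpinv : 0 < 1 / p := by
    rw [hp]
    have : Nonempty (Fin m) := Fin.pos_iff_nonempty.1 hm
    exact Finset.sum_pos (fun i _ => one_div_pos.2 (hppos i)) Finset.univ_nonempty
  have hp0 : 0 < p := one_div_pos.1 hpinv
  set Q : Set (Fin d → ℝ) := Cube d c l with hQ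
  have hQm : MeasurableSet Q := cube_measurable d c l
  set V : ℝ≥0∞ := volume Q with hV
  have hV0 : V ≠ 0 := by
    rw [hV, hQ, cube_volume]
    simp [pow_eq_zero_iff, ENNReal.ofReal_eq_zero, not_le, hl]
  have hVt : V ≠ ∞ := by
    rw [hV, hQ, cube_volume]
    exact ENNReal.pow_ne_top ENNReal.ofReal_ne_top
  set S : Fin m → ℝ≥0∞ := fun i => ∫⁻ x in Q, σ i x with hS
  have hSt : ∀ i, S i ≠ ∞ := fun i => (hloc i c l).ne
  set W : ℝ≥0∞ := ∫⁻ x in Q, ω x with hW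
  -- handle the degenerate case where some S i = 0
  by_cases hS0 : ∃ i, S i = 0
  · obtain ⟨i, hi⟩ := hS0
    have : (S i / V) ^ (p * (pp i - 1) / pp i) = 0 := by
      rw [hi, ENNReal.zero_div, ENNReal.zero_rpow_of_pos]
      exact div_pos (mul_pos hp0 (by linarith [hpp i])) (hppos i)
    calc W / V * ∏ j, (S j / V) ^ (p * (pp j - 1) / pp j)
        = W / V * 0 := by
          congr 1
          exact Finset.prod_eq_zero (Finset.mem_univ i) this
      _ = 0 := by rw [mul_zero]
      _ ≤ C ^ p := zero_le
  push_neg at hS0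
  -- test functions: indicators of Q
  set f : Fin m → (Fin d → ℝ) → ℝ≥0∞ := fun _ => Q.indicator (fun _ => 1) with hf
  have hfm : ∀ i, Measurable (f i) := fun i => Measurable.indicator measurable_const hQm
  have hbd := hbdd f hfm
  -- the right-hand side
  have hrhs : ∀ i, (∫⁻ x, (f i x) ^ (pp i) * σ i x) = S i := by
    intro i
    have : ∀ x, (f i x) ^ (pp i) * σ i x = Q.indicator (σ i) x := by
      intro x
      by_cases hx : x ∈ Q
      · simp [hf, Set.indicator_of_mem hx, ENNReal.one_rpow]
      · simp [hf, Set.indicator_of_notMem hx,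
          ENNReal.zero_rpow_of_pos (hppos i)]
    rw [funext this, lintegral_indicator hQm]
  simp only [hrhs] at hbd
  -- the left-hand side: pointwise lower bound for the maximal function on Q
  have hptwise : ∀ x ∈ Q, (∏ i, S i / V) ≤ mMax d m (fun i y => f i y * σ i y) x := by
    intro x hx
    have hint : ∀ i, (∫⁻ y in Q, f i y * σ i y) = S i := by
      intro i
      refine setLIntegral_congr_fun hQm (fun y hy => ?_)
      simp [hf, Set.indicator_of_mem hy]
    rw [mMax]
    refine le_iSup_of_le c (le_iSup_of_le l (le_iSup_of_le hl (le_iSup_of_le hx ?_)))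
    rw [← hQ]
    exact le_of_eq (Finset.prod_congr rfl fun i _ => by rw [hint i])
  have hlhs : (∏ i, S i / V) * W ^ (1 / p)
      ≤ (∫⁻ x, (mMax d m (fun i y => f i y * σ i y) x) ^ p * ω x) ^ (1 / p) := by
    have h1 : (∏ i, S i / V) ^ p * W ≤ ∫⁻ x, (mMax d m (fun i y => f i y * σ i y) x) ^ p * ω x := by
      calc (∏ i, S i / V) ^ p * W
          = ∫⁻ x in Q, (∏ i, S i / V) ^ p * ω x := by
            rw [lintegral_const_mul _ hω]
        _ ≤ ∫⁻ x in Q, (mMax d m (fun i y => f i y * σ i y) x) ^ p * ω x := by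
            refine setLIntegral_mono' hQm fun x hx => ?_
            exact mul_le_mul_left (ENNReal.rpow_le_rpow (hptwise x hx) hp0.le) _
        _ ≤ ∫⁻ x, (mMax d m (fun i y => f i y * σ i y) x) ^ p * ω x :=
            setLIntegral_le_lintegral _ _
    calc (∏ i, S i / V) * W ^ (1 / p)
        = ((∏ i, S i / V) ^ p * W) ^ (1 / p) := by
          rw [ENNReal.mul_rpow_of_nonneg _ _ hpinv.le, ← ENNReal.rpow_mul,
            mul_one_div_cancel hp0.ne', ENNReal.rpow_one]
      _ ≤ _ := ENNReal.rpow_le_rpow h1 hpinv.le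
  have key : (∏ i, S i / V) * W ^ (1 / p) ≤ C * ∏ i, (S i) ^ (1 / pp i) :=
    le_trans hlhs hbd
  exact alg_lemma hp0 hpp hp hS0 hSt hV0 hVt key
end
end

section
/- Let Q ⊂ R be a dyadic cube with R = Q^{(n)} (the n-th dyadic ancestor of Q). Suppose that for each 0 ≤ j < n and each 1 ≤ i ≤ m we have σ_i(Q^{(j+1)}) > D σ_i(Q^{(j)}), where D = 2^{2mpd/(mp-1)}. Then the joint A_{\vec p} expression at R satisfies (|R|^{-1}∫_R ω) ∏_{i=1}^m (|R|^{-1}∫_R σ_i)^{p/p_i'} ≥ 2^{dmnp} · (|Q|^{-1}∫_Q ω) ∏_{i=1}^m (|Q|^{-1}∫_Q σ_i)^{p/p_i'}. -/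
open MeasureTheory ENNReal

noncomputable section

lemma two_rpow_prod {ι : Type*} (s : Finset ι) (f : ι → ℝ) :
    ∏ i ∈ s, (2:ℝ≥0∞) ^ f i = (2:ℝ≥0∞) ^ (∑ i ∈ s, f i) := by
  induction s using Finset.cons_induction with
  | empty => simp
  | cons a s ha ih =>
      rw [Finset.prod_cons, Finset.sum_cons, ih,
        ← ENNReal.rpow_add _ _ two_ne_zero ENNReal.ofNat_ne_top]

lemma step_lemma (d m : ℕ) (p : ℝ) (pp : Fin m → ℝ)
    (hppos : 0 < p) (hpp1 : ∀ i, 1 < pp i)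
    (hmp : 1 < (m : ℝ) * p)
    (hsum : ∑ i, p * (pp i - 1) / pp i = (m : ℝ) * p - 1)
    (W W' V : ℝ≥0∞) (S S' : Fin m → ℝ≥0∞)
    (hV0 : V ≠ 0) (hVt : V ≠ ∞) (hW : W ≤ W')
    (hS : ∀ i, (2 : ℝ≥0∞) ^ ((2 * (m : ℝ) * p * (d : ℝ)) / ((m : ℝ) * p - 1)) * S i ≤ S' i) :
    (2:ℝ≥0∞) ^ ((d:ℝ) * m * p) * ((W / V) * ∏ i, (S i / V) ^ (p * (pp i - 1) / pp i))
      ≤ (W' / (2 ^ d * V)) * ∏ i, (S' i / (2 ^ d * V)) ^ (p * (pp i - 1) / pp i) := by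
  set a : ℝ := (2 * (m : ℝ) * p * (d : ℝ)) / ((m : ℝ) * p - 1) with ha
  have he0 : ∀ i, 0 ≤ p * (pp i - 1) / pp i := fun i => by
    have h := hpp1 i
    have h1 : (0:ℝ) < pp i := by linarith
    have h2 : (0:ℝ) ≤ pp i - 1 := by linarith
    positivity
  have key : ∀ (b : ℝ) (X : ℝ≥0∞),
      (2:ℝ≥0∞) ^ b * X / (2 ^ d * V) = (2:ℝ≥0∞) ^ (b - d) * (X / V) := by
    intro b X
    have h2d : ((2:ℝ≥0∞) ^ d : ℝ≥0∞) = (2:ℝ≥0∞) ^ ((d:ℝ)) := (ENNReal.rpow_natCast 2 d).symm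
    rw [div_eq_mul_inv, div_eq_mul_inv, h2d,
      ENNReal.mul_inv (Or.inl (ENNReal.rpow_pos (by norm_num) ENNReal.ofNat_ne_top).ne')
        (Or.inl (ENNReal.rpow_ne_top_of_nonneg (by positivity) ENNReal.ofNat_ne_top)),
      ← ENNReal.rpow_neg]
    calc (2:ℝ≥0∞) ^ b * X * ((2:ℝ≥0∞) ^ (-(d:ℝ)) * V⁻¹)
        = ((2:ℝ≥0∞) ^ b * (2:ℝ≥0∞) ^ (-(d:ℝ))) * (X * V⁻¹) := by ring
      _ = (2:ℝ≥0∞) ^ (b - d) * (X * V⁻¹) := by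
          rw [← ENNReal.rpow_add _ _ two_ne_zero ENNReal.ofNat_ne_top, ← sub_eq_add_neg]
  have step1 : (W / (2^d*V)) * ∏ i, ((2:ℝ≥0∞)^a * S i / (2^d*V)) ^ (p * (pp i - 1) / pp i)
      ≤ (W' / (2 ^ d * V)) * ∏ i, (S' i / (2 ^ d * V)) ^ (p * (pp i - 1) / pp i) := by
    gcongr with i
    · exact he0 i
    · exact hS i
  refine le_trans (le_of_eq ?_) step1
  have hW2 : W / ((2:ℝ≥0∞)^d*V) = (2:ℝ≥0∞) ^ ((0:ℝ) - d) * (W/V) := by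
    simpa using key 0 W
  have hprod : ∏ i, ((2:ℝ≥0∞)^a * S i / (2^d*V)) ^ (p * (pp i - 1) / pp i)
      = (2:ℝ≥0∞) ^ ((a - d) * ((m:ℝ)*p - 1)) *
          ∏ i, (S i / V) ^ (p * (pp i - 1) / pp i) := by
    have : ∀ i : Fin m, ((2:ℝ≥0∞)^a * S i / (2^d*V)) ^ (p * (pp i - 1) / pp i)
        = (2:ℝ≥0∞) ^ ((a - d) * (p * (pp i - 1) / pp i)) *
            (S i / V) ^ (p * (pp i - 1) / pp i) := by
      intro i
      rw [key a (S i), ENNReal.mul_rpow_of_nonneg _ _ (he0 i), ← ENNReal.rpow_mul]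
    rw [Finset.prod_congr rfl (fun i _ => this i), Finset.prod_mul_distrib,
      two_rpow_prod, ← Finset.mul_sum, hsum]
  rw [hW2, hprod]
  have hexp : ((0:ℝ) - d) + (a - d) * ((m:ℝ)*p - 1) = (d:ℝ) * m * p := by
    have h1 : (m:ℝ)*p - 1 ≠ 0 := by linarith
    rw [ha]
    field_simp
    ring
  have h2 : (2:ℝ≥0∞) ^ ((0:ℝ) - d) * (2:ℝ≥0∞) ^ ((a - d) * ((m:ℝ)*p - 1))
      = (2:ℝ≥0∞) ^ ((d:ℝ) * m * p) := by
    rw [← ENNReal.rpow_add _ _ two_ne_zero ENNReal.ofNat_ne_top, hexp]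
  rw [← h2]
  ring

/-- Along a chain of dyadic ancestors `Q = Qc 0 ⊂ Qc 1 ⊂ ⋯ ⊂ Qc n = R`, if every σᵢ grows by
more than the factor `D = 2^{2mpd/(mp-1)}` at each step, then the joint `A_{p⃗}` expression at
`R` dominates `2^{dmnp}` times the one at `Q`. -/
theorem ancestor_doubling_Ap_growth (d m n : ℕ) (hd : 0 < d) (hm : 0 < m)
    (p : ℝ) (pp : Fin m → ℝ) (hpp : ∀ i, 1 < pp i)
    (hp : 1 / p = ∑ i, 1 / pp i) (hmp : 1 < (m : ℝ) * p)
    (ω : (Fin d → ℝ) → ℝ≥0∞) (σ : Fin m → (Fin d → ℝ) → ℝ≥0∞)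
    (hω : Measurable ω) (hσ : ∀ i, Measurable (σ i))
    (Qc : ℕ → Set (Fin d → ℝ)) (hQmeas : ∀ j, MeasurableSet (Qc j))
    (hsub : ∀ j, Qc j ⊆ Qc (j + 1))
    (hvol : ∀ j, volume (Qc (j + 1)) = 2 ^ d * volume (Qc j))
    (hvol0 : 0 < volume (Qc 0)) (hvoln : volume (Qc n) < ∞)
    (hωfin : (∫⁻ x in Qc n, ω x) < ∞) (hσfin : ∀ i, (∫⁻ x in Qc n, σ i x) < ∞)
    (hD : ∀ j < n, ∀ i,
      (2 : ℝ≥0∞) ^ ((2 * (m : ℝ) * p * (d : ℝ)) / ((m : ℝ) * p - 1))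
          * (∫⁻ x in Qc j, σ i x)
        < ∫⁻ x in Qc (j + 1), σ i x) :
    (2 : ℝ≥0∞) ^ ((d : ℝ) * (m : ℝ) * (n : ℝ) * p) *
        (((∫⁻ x in Qc 0, ω x) / volume (Qc 0))
          * ∏ i, ((∫⁻ x in Qc 0, σ i x) / volume (Qc 0)) ^ (p * (pp i - 1) / pp i))
      ≤ ((∫⁻ x in Qc n, ω x) / volume (Qc n))
          * ∏ i, ((∫⁻ x in Qc n, σ i x) / volume (Qc n)) ^ (p * (pp i - 1) / pp i) := by
  have hppos : 0 < p := by
    have h1 : 0 < ∑ i, 1 / pp i :=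
      Finset.sum_pos (fun i _ => by have := hpp i; positivity) ⟨⟨0, hm⟩, Finset.mem_univ _⟩
    have h2 : 0 < 1 / p := hp ▸ h1
    exact one_div_pos.mp h2
  have hsum : ∑ i, p * (pp i - 1) / pp i = (m:ℝ)*p - 1 := by
    have h1 : ∀ i : Fin m, p * (pp i - 1) / pp i = p - p * (1 / pp i) := by
      intro i
      have h := hpp i
      have : pp i ≠ 0 := by linarith
      field_simp
    rw [Finset.sum_congr rfl (fun i _ => h1 i), Finset.sum_sub_distrib, Finset.sum_const,
      ← Finset.mul_sum, ← hp, Finset.card_univ, Fintype.card_fin, nsmul_eq_mul,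
      mul_one_div, div_self hppos.ne']
  have hmono : ∀ j k, j ≤ k → Qc j ⊆ Qc k := by
    intro j k h
    induction h with
    | refl => exact subset_rfl
    | step h ih => exact ih.trans (hsub _)
  induction n with
  | zero => simp
  | succ n ih =>
    have hvn : volume (Qc n) < ∞ := (measure_mono (hsub n)).trans_lt hvoln
    have hωn : (∫⁻ x in Qc n, ω x) < ∞ := (lintegral_mono_set (hsub n)).trans_lt hωfin
    have hσn : ∀ i, (∫⁻ x in Qc n, σ i x) < ∞ := fun i =>
      (lintegral_mono_set (hsub n)).trans_lt (hσfin i)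
    have ihn := ih hvn hωn hσn (fun j hj i => hD j (Nat.lt_succ_of_lt hj) i)
    have hv0n : volume (Qc n) ≠ 0 :=
      (lt_of_lt_of_le hvol0 (measure_mono (hmono 0 n (Nat.zero_le n)))).ne'
    have hstep := step_lemma d m p pp hppos hpp hmp hsum
      (∫⁻ x in Qc n, ω x) (∫⁻ x in Qc (n+1), ω x) (volume (Qc n))
      (fun i => ∫⁻ x in Qc n, σ i x) (fun i => ∫⁻ x in Qc (n+1), σ i x)
      hv0n hvn.ne (lintegral_mono_set (hsub n)) (fun i => (hD n (Nat.lt_succ_self n) i).le)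
    rw [hvol n]
    have h2 : (2 : ℝ≥0∞) ^ ((d : ℝ) * (m : ℝ) * ((n+1 : ℕ) : ℝ) * p)
        = (2 : ℝ≥0∞) ^ ((d : ℝ) * m * p) * (2 : ℝ≥0∞) ^ ((d : ℝ) * (m : ℝ) * (n : ℝ) * p) := by
      rw [← ENNReal.rpow_add _ _ two_ne_zero ENNReal.ofNat_ne_top]
      congr 1
      push_cast
      ring
    rw [h2, mul_assoc]
    exact le_trans (mul_le_mul_right ihn _) hstep
end
end
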